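/- Let λ: R' → R be a surjective semiring homomorphism, φ: V' → V a surjective λ-semilinear map from a free R'-module V' to an R-module V, and (q, b) a balanced quadratic pair on V. Then (q, b) lifts to a balanced quadratic pair (q', b') on V', i.e., λ ∘ q' = q ∘ φ, λ ∘ b' = b ∘ (φ × φ), and b'(x',x') = 2q'(x') for all x' ∈ V'. -/

import Mathlib

/-- A (not necessarily symmetric) `R`-bilinear form on `V`. -/
def IsBilin {R : Type*} [CommSemiring R] {V : Type*} [AddCommMonoid V] [Module R V]
    (b : V → V → R) : Prop :=
  (∀ x y z : V, b (x + y) z = b x z + b y z) ∧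
  (∀ x y z : V, b x (y + z) = b x y + b x z) ∧
  (∀ (c : R) (x y : V), b (c • x) y = c * b x y) ∧
  (∀ (c : R) (x y : V), b x (c • y) = c * b x y)

/-- `b` is a (symmetric bilinear) companion of `q`. -/
def IsCompanion {R : Type*} [CommSemiring R] {V : Type*} [AddCommMonoid V] [Module R V]
    (q : V → R) (b : V → V → R) : Prop :=
  IsBilin b ∧ (∀ x y : V, b x y = b y x) ∧ ∀ x y : V, q (x + y) = q x + q y + b x y

/-- `q` is a quadratic form: homogeneous of degree 2 and admitting some companion. -/
def IsQuadForm {R : Type*} [CommSemiring R] {V : Type*} [AddCommMonoid V] [Module R V]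
    (q : V → R) : Prop :=
  (∀ (c : R) (x : V), q (c • x) = c ^ 2 * q x) ∧ ∃ b, IsCompanion q b

variable {R : Type*} [CommSemiring R] {V : Type*} [AddCommMonoid V] [Module R V]

section Aux
variable {I : Type*}

lemma b_zero_right (b : V → V → R) (hB : IsBilin b) (x : V) : b x 0 = 0 := by
  have : b x ((0:R) • (0:V)) = 0 * b x 0 := hB.2.2.2 0 x 0
  simpa using this

lemma q_zero (q : V → R) (hq : ∀ (c : R) (x : V), q (c • x) = c ^ 2 * q x) : q 0 = 0 := by
  have : q ((0:R) • (0:V)) = 0 ^ 2 * q 0 := hq 0 0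
  simpa using this

lemma blin_right (b : V → V → R) (hB : IsBilin b) (u : V) (w : I → V) (a : I → R)
    (s : Finset I) :
    b u (∑ j ∈ s, a j • w j) = ∑ j ∈ s, a j * b u (w j) := by
  classical
  induction s using Finset.induction_on with
  | empty => simpa using b_zero_right b hB u
  | insert _ _ hi ih =>
      rw [Finset.sum_insert hi, Finset.sum_insert hi, hB.2.1, hB.2.2.2, ih]

lemma expand_q (q : V → R) (b : V → V → R)
    (hq : ∀ (c : R) (x : V), q (c • x) = c ^ 2 * q x) (hb : IsCompanion q b)
    (w : I → V) (Q : I → I → R) (hQd : ∀ i, Q i i = q (w i))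
    (hQo : ∀ i j, i ≠ j → Q i j + Q j i = b (w i) (w j))
    (s : Finset I) (a : I → R) :
    q (∑ i ∈ s, a i • w i) = ∑ i ∈ s, ∑ j ∈ s, a i * a j * Q i j := by
  classical
  induction s using Finset.induction_on with
  | empty => simpa using q_zero q hq
  | @insert i s hi ih =>
      rw [Finset.sum_insert hi, hb.2.2, ih, hq, hb.1.2.2.1,
        blin_right b hb.1 (w i) w a s]
      rw [Finset.sum_insert hi]
      have h1 : ∀ k ∈ s, (∑ j ∈ insert i s, a k * a j * Q k j)
          = a k * a i * Q k i + ∑ j ∈ s, a k * a j * Q k j := by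
        intro k _; rw [Finset.sum_insert hi]
      rw [Finset.sum_congr rfl h1, Finset.sum_insert hi, Finset.sum_add_distrib]
      have h2 : a i * a i * Q i i = a i ^ 2 * q (w i) := by rw [hQd]; ring
      have h3 : (∑ j ∈ s, a i * a j * Q i j) + ∑ k ∈ s, a k * a i * Q k i
          = a i * ∑ j ∈ s, a j * b (w i) (w j) := by
        rw [← Finset.sum_add_distrib, Finset.mul_sum]
        refine Finset.sum_congr rfl fun j hj => ?_
        have hij : i ≠ j := fun h => hi (h ▸ hj)
        have h := hQo i j hij
        calc a i * a j * Q i j + a j * a i * Q j i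
            = a i * a j * (Q i j + Q j i) := by ring
          _ = a i * (a j * b (w i) (w j)) := by rw [h]; ring
      rw [h2, ← h3]; ring

lemma expand_b (q : V → R) (b : V → V → R) (hb : IsCompanion q b)
    (w : I → V) (s t : Finset I) (a c : I → R) :
    b (∑ i ∈ s, a i • w i) (∑ j ∈ t, c j • w j)
      = ∑ i ∈ s, ∑ j ∈ t, a i * c j * b (w i) (w j) := by
  classical
  rw [blin_right b hb.1 _ w c t]
  trans ∑ j ∈ t, ∑ i ∈ s, a i * c j * b (w i) (w j)
  · refine Finset.sum_congr rfl fun j _ => ?_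
    rw [hb.2.1, blin_right b hb.1 (w j) w a s, Finset.mul_sum]
    exact Finset.sum_congr rfl fun i _ => by rw [hb.2.1 (w j) (w i)]; ring
  · exact Finset.sum_comm

lemma sum_ext {R' : Type*} [CommSemiring R'] (f g : I →₀ R') (s t : Finset I)
    (hs : f.support ⊆ s) (ht : g.support ⊆ t) (M : I → I → R') :
    (∑ i ∈ f.support, ∑ j ∈ g.support, f i * g j * M i j)
      = ∑ i ∈ s, ∑ j ∈ t, f i * g j * M i j := by
  classical
  rw [Finset.sum_subset hs (fun i _ hi => ?_)]
  · refine Finset.sum_congr rfl fun i _ => ?_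
    exact Finset.sum_subset ht (fun j _ hj => by
      rw [Finsupp.notMem_support_iff.mp hj]; ring)
  · apply Finset.sum_eq_zero
    intro j _
    rw [Finsupp.notMem_support_iff.mp hi]; ring

lemma sum_swap_add {R' : Type*} [CommSemiring R'] (S : Finset I) (r : I → R')
    (M : I → I → R') :
    ∑ i ∈ S, ∑ j ∈ S, r i * r j * (M i j + M j i)
      = 2 * ∑ i ∈ S, ∑ j ∈ S, r i * r j * M i j := by
  rw [two_mul]
  calc ∑ i ∈ S, ∑ j ∈ S, r i * r j * (M i j + M j i)
      = (∑ i ∈ S, ∑ j ∈ S, r i * r j * M i j)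
        + ∑ i ∈ S, ∑ j ∈ S, r i * r j * M j i := by
        rw [← Finset.sum_add_distrib]
        refine Finset.sum_congr rfl fun i _ => ?_
        rw [← Finset.sum_add_distrib]
        exact Finset.sum_congr rfl fun j _ => by ring
    _ = (∑ i ∈ S, ∑ j ∈ S, r i * r j * M i j)
        + ∑ i ∈ S, ∑ j ∈ S, r i * r j * M i j := by
        congr 1
        rw [Finset.sum_comm]
        exact Finset.sum_congr rfl fun i _ => Finset.sum_congr rfl fun j _ => by ring

end Aux

/-- Every balanced quadratic pair lifts through a surjective semilinear map from a free
module to a balanced quadratic pair. -/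
theorem stmt9 {R' : Type*} [CommSemiring R'] {V' : Type*} [AddCommMonoid V'] [Module R' V']
    {I : Type*} (lam : R' →+* R) (hlam : Function.Surjective lam)
    (ε' : Module.Basis I R' V') (φ : V' → V)
    (hadd : ∀ x y : V', φ (x + y) = φ x + φ y)
    (hsmul : ∀ (a : R') (x : V'), φ (a • x) = lam a • φ x)
    (hsurj : Function.Surjective φ)
    (q : V → R) (b : V → V → R)
    (hq : ∀ (c : R) (x : V), q (c • x) = c ^ 2 * q x)
    (hb : IsCompanion q b)
    (hbal : ∀ x : V, b x x = 2 * q x) :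
    ∃ (q' : V' → R') (b' : V' → V' → R'),
      (∀ (c : R') (x : V'), q' (c • x) = c ^ 2 * q' x) ∧
      IsCompanion q' b' ∧
      (∀ x' : V', b' x' x' = 2 * q' x') ∧
      (∀ x' : V', lam (q' x') = q (φ x')) ∧
      (∀ x' y' : V', lam (b' x' y') = b (φ x') (φ y')) := by
  classical
  letI : LinearOrder I := IsWellOrder.linearOrder WellOrderingRel
  set v : I → V := fun i => φ (ε' i) with hv
  choose c hc using fun i => hlam (q (v i))
  choose e he using fun i j => hlam (b (v i) (v j))
  set D : I → I → R' := fun i j =>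
    if i < j then e i j else if i = j then c i else 0 with hD
  have hDd : ∀ i, D i i = c i := by
    intro i; simp [hD]
  have hDlamd : ∀ i, lam (D i i) = q (v i) := fun i => by rw [hDd]; exact hc i
  have hDlamo : ∀ i j, i ≠ j → lam (D i j) + lam (D j i) = b (v i) (v j) := by
    intro i j hij
    rcases lt_or_gt_of_ne hij with h | h
    · have h2 : ¬ j < i := not_lt_of_gt h
      have h3 : j ≠ i := Ne.symm hij
      simp only [hD, if_pos h, if_neg h2, if_neg h3, map_zero, add_zero]
      exact he i j
    · have h2 : ¬ i < j := not_lt_of_gt h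
      have h3 : i ≠ j := hij
      simp only [hD, if_pos h, if_neg h2, if_neg h3, map_zero, zero_add]
      rw [he j i]; exact hb.2.1 (v j) (v i)
  -- definitions
  set q' : V' → R' := fun x =>
    ∑ i ∈ (ε'.repr x).support, ∑ j ∈ (ε'.repr x).support,
      (ε'.repr x) i * (ε'.repr x) j * D i j with hq'
  set b' : V' → V' → R' := fun x y =>
    ∑ i ∈ (ε'.repr x).support, ∑ j ∈ (ε'.repr y).support,
      (ε'.repr x) i * (ε'.repr y) j * (D i j + D j i) with hb'
  -- generalized-support expressions
  have hq'ext : ∀ (x : V') (s : Finset I), (ε'.repr x).support ⊆ s →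
      q' x = ∑ i ∈ s, ∑ j ∈ s, (ε'.repr x) i * (ε'.repr x) j * D i j := by
    intro x s hs
    exact sum_ext (ε'.repr x) (ε'.repr x) s s hs hs D
  have hb'ext : ∀ (x y : V') (s t : Finset I),
      (ε'.repr x).support ⊆ s → (ε'.repr y).support ⊆ t →
      b' x y = ∑ i ∈ s, ∑ j ∈ t, (ε'.repr x) i * (ε'.repr y) j * (D i j + D j i) := by
    intro x y s t hs ht
    exact sum_ext (ε'.repr x) (ε'.repr y) s t hs ht _
  -- φ expressed via coordinates
  have hφ0 : φ 0 = 0 := by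
    have : φ ((0:R') • (0:V')) = lam 0 • φ 0 := hsmul 0 0
    simpa using this
  have hφsum : ∀ (s : Finset I) (f : I → R'),
      φ (∑ i ∈ s, f i • ε' i) = ∑ i ∈ s, lam (f i) • v i := by
    intro s f
    induction s using Finset.induction_on with
    | empty => simpa using hφ0
    | insert _ _ hi ih =>
        rw [Finset.sum_insert hi, hadd, hsmul, ih, Finset.sum_insert hi]
  have hrep : ∀ x : V', x = ∑ i ∈ (ε'.repr x).support, (ε'.repr x) i • ε' i := by
    intro x
    conv_lhs => rw [← ε'.linearCombination_repr x]
    rw [Finsupp.linearCombination_apply, Finsupp.sum]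
  have hφx : ∀ x : V', φ x = ∑ i ∈ (ε'.repr x).support, lam ((ε'.repr x) i) • v i := by
    intro x
    conv_lhs => rw [hrep x]
    exact hφsum _ _
  refine ⟨q', b', ?_, ⟨⟨?_, ?_, ?_, ?_⟩, ?_, ?_⟩, ?_, ?_, ?_⟩
  -- homogeneity of q'
  · intro a x
    have hsub : (ε'.repr (a • x)).support ⊆ (ε'.repr x).support := by
      rw [map_smul]; exact Finsupp.support_smul
    rw [hq'ext (a • x) _ hsub]
    simp only [hq']
    rw [Finset.mul_sum]
    refine Finset.sum_congr rfl fun i _ => ?_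
    rw [Finset.mul_sum]
    refine Finset.sum_congr rfl fun j _ => ?_
    rw [map_smul]
    simp only [Finsupp.smul_apply, smul_eq_mul]
    ring
  -- b' additive in first arg
  · intro x y z
    have hxy : (ε'.repr (x + y)).support ⊆ (ε'.repr x).support ∪ (ε'.repr y).support := by
      rw [map_add]; exact Finsupp.support_add
    set s := (ε'.repr x).support ∪ (ε'.repr y).support with hs
    rw [hb'ext (x+y) z s _ hxy le_rfl,
        hb'ext x z s _ Finset.subset_union_left le_rfl,
        hb'ext y z s _ Finset.subset_union_right le_rfl,
        ← Finset.sum_add_distrib]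
    refine Finset.sum_congr rfl fun i _ => ?_
    rw [← Finset.sum_add_distrib]
    refine Finset.sum_congr rfl fun j _ => ?_
    rw [map_add]
    simp only [Finsupp.add_apply]
    ring
  -- b' additive in second arg
  · intro x y z
    have hyz : (ε'.repr (y + z)).support ⊆ (ε'.repr y).support ∪ (ε'.repr z).support := by
      rw [map_add]; exact Finsupp.support_add
    set t := (ε'.repr y).support ∪ (ε'.repr z).support with ht
    rw [hb'ext x (y+z) _ t le_rfl hyz,
        hb'ext x y _ t le_rfl Finset.subset_union_left,
        hb'ext x z _ t le_rfl Finset.subset_union_right,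
        ← Finset.sum_add_distrib]
    refine Finset.sum_congr rfl fun i _ => ?_
    rw [← Finset.sum_add_distrib]
    refine Finset.sum_congr rfl fun j _ => ?_
    rw [map_add]
    simp only [Finsupp.add_apply]
    ring
  -- b' smul first
  · intro a x y
    have hsub : (ε'.repr (a • x)).support ⊆ (ε'.repr x).support := by
      rw [map_smul]; exact Finsupp.support_smul
    rw [hb'ext (a • x) y _ _ hsub le_rfl]
    simp only [hb']
    rw [Finset.mul_sum]
    refine Finset.sum_congr rfl fun i _ => ?_
    rw [Finset.mul_sum]
    refine Finset.sum_congr rfl fun j _ => ?_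
    rw [map_smul]
    simp only [Finsupp.smul_apply, smul_eq_mul]
    ring
  -- b' smul second
  · intro a x y
    have hsub : (ε'.repr (a • y)).support ⊆ (ε'.repr y).support := by
      rw [map_smul]; exact Finsupp.support_smul
    rw [hb'ext x (a • y) _ _ le_rfl hsub]
    simp only [hb']
    rw [Finset.mul_sum]
    refine Finset.sum_congr rfl fun i _ => ?_
    rw [Finset.mul_sum]
    refine Finset.sum_congr rfl fun j _ => ?_
    rw [map_smul]
    simp only [Finsupp.smul_apply, smul_eq_mul]
    ring
  -- b' symmetric
  · intro x y
    simp only [hb']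
    rw [Finset.sum_comm]
    refine Finset.sum_congr rfl fun i _ => Finset.sum_congr rfl fun j _ => by ring
  -- companion identity
  · intro x y
    have hxy : (ε'.repr (x + y)).support ⊆ (ε'.repr x).support ∪ (ε'.repr y).support := by
      rw [map_add]; exact Finsupp.support_add
    set s := (ε'.repr x).support ∪ (ε'.repr y).support with hs
    rw [hq'ext (x+y) s hxy, hq'ext x s Finset.subset_union_left,
        hq'ext y s Finset.subset_union_right,
        hb'ext x y s s Finset.subset_union_left Finset.subset_union_right]
    have key : ∀ i ∈ s, ∀ j ∈ s,
        (ε'.repr (x+y)) i * (ε'.repr (x+y)) j * D i j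
        = (ε'.repr x) i * (ε'.repr x) j * D i j
          + (ε'.repr y) i * (ε'.repr y) j * D i j
          + ((ε'.repr x) i * (ε'.repr y) j * D i j
             + (ε'.repr y) i * (ε'.repr x) j * D i j) := by
      intro i _ j _
      rw [map_add]
      simp only [Finsupp.add_apply]
      ring
    calc ∑ i ∈ s, ∑ j ∈ s, (ε'.repr (x+y)) i * (ε'.repr (x+y)) j * D i j
        = ∑ i ∈ s, ∑ j ∈ s,
            ((ε'.repr x) i * (ε'.repr x) j * D i j
            + (ε'.repr y) i * (ε'.repr y) j * D i j
            + ((ε'.repr x) i * (ε'.repr y) j * D i j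
               + (ε'.repr y) i * (ε'.repr x) j * D i j)) := by
          refine Finset.sum_congr rfl fun i hi => Finset.sum_congr rfl fun j hj => ?_
          exact key i hi j hj
      _ = (∑ i ∈ s, ∑ j ∈ s, (ε'.repr x) i * (ε'.repr x) j * D i j)
          + (∑ i ∈ s, ∑ j ∈ s, (ε'.repr y) i * (ε'.repr y) j * D i j)
          + ((∑ i ∈ s, ∑ j ∈ s, (ε'.repr x) i * (ε'.repr y) j * D i j)
             + ∑ i ∈ s, ∑ j ∈ s, (ε'.repr y) i * (ε'.repr x) j * D i j) := by
          simp only [Finset.sum_add_distrib]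
      _ = (∑ i ∈ s, ∑ j ∈ s, (ε'.repr x) i * (ε'.repr x) j * D i j)
          + (∑ i ∈ s, ∑ j ∈ s, (ε'.repr y) i * (ε'.repr y) j * D i j)
          + ∑ i ∈ s, ∑ j ∈ s, (ε'.repr x) i * (ε'.repr y) j * (D i j + D j i) := by
          congr 1
          rw [Finset.sum_comm (s := s) (t := s)
            (f := fun i j => (ε'.repr y) i * (ε'.repr x) j * D i j)]
          rw [← Finset.sum_add_distrib]
          refine Finset.sum_congr rfl fun i _ => ?_
          rw [← Finset.sum_add_distrib]
          refine Finset.sum_congr rfl fun j _ => by ring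
  -- balanced
  · intro x
    simp only [hb', hq']
    exact sum_swap_add _ _ D
  -- lam q'
  · intro x
    simp only [hq']
    rw [map_sum]
    rw [hφx x]
    rw [expand_q q b hq hb v (fun i j => lam (D i j)) hDlamd hDlamo]
    refine Finset.sum_congr rfl fun i _ => ?_
    rw [map_sum]
    refine Finset.sum_congr rfl fun j _ => by rw [map_mul, map_mul]
  -- lam b'
  · intro x y
    simp only [hb']
    rw [map_sum, hφx x, hφx y, expand_b q b hb v _ _ _ _]
    refine Finset.sum_congr rfl fun i _ => ?_
    rw [map_sum]
    refine Finset.sum_congr rfl fun j hj => ?_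
    rw [map_mul, map_mul, map_add]
    by_cases hij : i = j
    · subst hij
      rw [hbal (v i), ← hDlamd i]
      ring
    · rw [hDlamo i j hij]
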